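/- Every 3-dimensional real Lie algebra that is nonabelian and admits an ad-invariant nondegenerate symmetric bilinear form is simple (isomorphic to sl(2,ℝ) or su(2)). -/

import Mathlib

open LinearMap (BilinForm)
open Module Submodule

/-- Brackets of elements of a 2-generated subspace lie in the span of the bracket of
the generators. -/
lemma stmt17_bk2 {g : Type*} [LieRing g] [LieAlgebra ℝ g] (e f a b : g)
    (ha : a ∈ Submodule.span ℝ ({e, f} : Set g))
    (hb : b ∈ Submodule.span ℝ ({e, f} : Set g)) :
    ⁅a, b⁆ ∈ Submodule.span ℝ ({⁅e, f⁆} : Set g) := by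
  obtain ⟨c₁, c₂, rfl⟩ := Submodule.mem_span_pair.1 ha
  obtain ⟨d₁, d₂, rfl⟩ := Submodule.mem_span_pair.1 hb
  refine Submodule.mem_span_singleton.2 ⟨c₁ * d₂ - c₂ * d₁, ?_⟩
  have hfe : ⁅f, e⁆ = -⁅e, f⁆ := by rw [← lie_skew]
  simp only [lie_add, add_lie, lie_smul, smul_lie, lie_self, smul_zero, zero_add, add_zero, hfe]
  module

/-- A 2-dimensional subspace is the span of two elements. -/
lemma stmt17_span2 {V : Type*} [AddCommGroup V] [Module ℝ V] [FiniteDimensional ℝ V]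
    (W : Submodule ℝ V) (h : finrank ℝ W = 2) :
    ∃ e f : V, W = Submodule.span ℝ ({e, f} : Set V) := by
  obtain b := Module.finBasisOfFinrankEq ℝ W h
  refine ⟨(b 0 : V), (b 1 : V), le_antisymm ?_ ?_⟩
  · intro w hw
    have h1 : (⟨w, hw⟩ : W) = b.repr ⟨w, hw⟩ 0 • b 0 + b.repr ⟨w, hw⟩ 1 • b 1 := by
      conv_lhs => rw [← b.sum_repr ⟨w, hw⟩]
      rw [Fin.sum_univ_two]
    refine Submodule.mem_span_pair.2 ⟨b.repr ⟨w, hw⟩ 0, b.repr ⟨w, hw⟩ 1, ?_⟩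
    have := congrArg (Submodule.subtype W) h1
    simpa using this.symm
  · rw [Submodule.span_le]
    rintro v (rfl | rfl)
    · exact (b 0).2
    · exact (b 1).2

/-- Every 3-dimensional nonabelian real Lie algebra admitting an
ad-invariant nondegenerate symmetric bilinear form is simple. -/
theorem stmt17 (g : Type*) [LieRing g] [LieAlgebra ℝ g] [Module.Finite ℝ g]
    (hdim : Module.finrank ℝ g = 3)
    (hnonabelian : ¬ ∀ x y : g, ⁅x, y⁆ = 0)
    (B : BilinForm ℝ g) (hBnd : B.Nondegenerate)
    (hBsymm : ∀ x y : g, B x y = B y x)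
    (hBinv : ∀ x y z : g, B ⁅x, y⁆ z = B x ⁅y, z⁆) :
    LieAlgebra.IsSimple ℝ g := by
  push_neg at hnonabelian
  obtain ⟨x₀, y₀, hxy₀⟩ := hnonabelian
  have hrefl : B.IsRefl := fun x y h => by rw [hBsymm]; exact h
  -- the commutator subspace
  set D : Submodule ℝ g := Submodule.span ℝ {m : g | ∃ x y : g, ⁅x, y⁆ = m} with hD
  have hDgen : ∀ x y : g, ⁅x, y⁆ ∈ D := fun x y => Submodule.subset_span ⟨x, y, rfl⟩
  -- central elements are orthogonal to D
  have hBzD : ∀ z : g, (∀ x : g, ⁅x, z⁆ = 0) → ∀ d ∈ D, B d z = 0 := by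
    intro z hz d hd
    induction hd using Submodule.span_induction with
    | mem m hm =>
      obtain ⟨x, y, rfl⟩ := hm
      rw [hBinv x y z, hz y]
      simp
    | zero => simp
    | add a b _ _ ha hb => simp [ha, hb]
    | smul c a _ ha => simp [ha]
  -- elements orthogonal to D are central
  have hDorth : ∀ z : g, (∀ d ∈ D, B d z = 0) → ∀ x : g, ⁅x, z⁆ = 0 := by
    intro z h x
    apply hBnd.1
    intro n
    rw [hBsymm, ← hBinv n x z]
    exact h _ (hDgen n x)
  have horthD : ∀ z : g, z ∈ B.orthogonal D ↔ ∀ x : g, ⁅x, z⁆ = 0 := by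
    intro z
    constructor
    · intro hz
      exact hDorth z (fun d hd => hz d hd)
    · intro hz d hd
      exact hBzD z hz d hd
  have hfinorth : finrank ℝ (B.orthogonal D) = 3 - finrank ℝ D := by
    rw [LinearMap.BilinForm.finrank_orthogonal hBnd, hdim]
  have hDle : finrank ℝ D ≤ 3 := hdim ▸ Submodule.finrank_le D
  have hDpos : 0 < finrank ℝ D := by
    refine Module.finrank_pos_iff_exists_ne_zero.2 ⟨⟨⁅x₀, y₀⁆, hDgen x₀ y₀⟩, ?_⟩
    simpa using hxy₀
  -- helper: a codimension one subspace plus a vector outside spans everything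
  have hsup : ∀ (W : Submodule ℝ g) (x : g), x ∉ W → finrank ℝ W + 1 = 3 →
      W ⊔ (ℝ ∙ x) = ⊤ := by
    intro W x hx hW
    have hxne : x ≠ 0 := fun h => hx (h ▸ W.zero_mem)
    have h1 : finrank ℝ (ℝ ∙ x) = 1 := finrank_span_singleton hxne
    have hint : W ⊓ (ℝ ∙ x) = ⊥ := by
      rw [eq_bot_iff]
      rintro y ⟨hyW, hyx⟩
      obtain ⟨c, rfl⟩ := Submodule.mem_span_singleton.1 hyx
      rcases eq_or_ne c 0 with rfl | hc
      · simp
      · exact absurd (by simpa [smul_smul, inv_mul_cancel₀ hc] using W.smul_mem c⁻¹ hyW) hx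
    apply Submodule.eq_top_of_finrank_eq
    have h2 := Submodule.finrank_sup_add_finrank_inf_eq W (ℝ ∙ x)
    rw [hint, finrank_bot, add_zero, h1] at h2
    rw [hdim]
    omega
  -- Step 1: the center is trivial
  have hZ0 : ∀ z : g, (∀ x : g, ⁅x, z⁆ = 0) → z = 0 := by
    intro z hz
    by_contra hzne
    have hzo : z ∈ B.orthogonal D := (horthD z).2 hz
    have horthpos : 0 < finrank ℝ (B.orthogonal D) :=
      Module.finrank_pos_iff_exists_ne_zero.2 ⟨⟨z, hzo⟩, by simpa using hzne⟩
    have hD2 : finrank ℝ D ≤ 2 := by omega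
    rcases Nat.lt_or_ge (finrank ℝ D) 2 with hD1 | hD2'
    · -- finrank D = 1, so the orthogonal (all central) has dimension 2; g is abelian
      have hfD : finrank ℝ D = 1 := by omega
      have hfO : finrank ℝ (B.orthogonal D) = 2 := by rw [hfinorth, hfD]
      have hOne : B.orthogonal D ≠ ⊤ := by
        intro h
        rw [h, finrank_top, hdim] at hfO
        omega
      obtain ⟨x, hx⟩ : ∃ x : g, x ∉ B.orthogonal D := by
        by_contra h
        push_neg at h
        exact hOne (Submodule.eq_top_iff'.2 h)
      have htop : B.orthogonal D ⊔ (ℝ ∙ x) = ⊤ := hsup _ x hx (by omega)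
      -- all brackets vanish
      apply hxy₀
      have hmem : ∀ a : g, ∃ za ∈ B.orthogonal D, ∃ c : ℝ, za + c • x = a := by
        intro a
        have : a ∈ B.orthogonal D ⊔ (ℝ ∙ x) := htop ▸ Submodule.mem_top
        obtain ⟨za, hza, w, hw, hsum⟩ := Submodule.mem_sup.1 this
        obtain ⟨c, rfl⟩ := Submodule.mem_span_singleton.1 hw
        exact ⟨za, hza, c, hsum⟩
      obtain ⟨za, hza, c, rfl⟩ := hmem x₀
      obtain ⟨zb, hzb, c', rfl⟩ := hmem y₀
      have hzac : ∀ y : g, ⁅y, za⁆ = 0 := hDorth za (fun d hd => hza d hd)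
      have hzbc : ∀ y : g, ⁅y, zb⁆ = 0 := hDorth zb (fun d hd => hzb d hd)
      have hzal : ∀ w : g, ⁅za, w⁆ = 0 := fun w => by rw [← lie_skew, hzac w, neg_zero]
      simp [add_lie, lie_add, smul_lie, lie_smul, hzal, hzbc, lie_self]
    · -- finrank D = 2, orthogonal = center has dimension 1
      have hfD : finrank ℝ D = 2 := by omega
      obtain ⟨e, f, hef⟩ := stmt17_span2 D hfD
      by_cases hzD : z ∈ D
      · -- z ∈ D : then D is abelian and D ⊆ range (ad x ∘ incl) for x ∉ D
        -- first, ⁅e, f⁆ = 0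
        have hze : z ∈ Submodule.span ℝ ({e, f} : Set g) := hef ▸ hzD
        obtain ⟨c₁, c₂, hzc⟩ := Submodule.mem_span_pair.1 hze
        have hef0 : ⁅e, f⁆ = 0 := by
          rcases eq_or_ne c₁ 0 with rfl | hc₁
          · rcases eq_or_ne c₂ 0 with rfl | hc₂
            · exfalso; apply hzne; rw [← hzc]; simp
            · have : ⁅z, e⁆ = 0 := by rw [← neg_eq_zero, ← lie_skew]; rw [hz e]; simp
              rw [← hzc] at this
              simp only [add_lie, smul_lie, lie_self, smul_zero, zero_add, zero_smul] at this
              have : c₂ • ⁅f, e⁆ = 0 := this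
              rw [← neg_eq_zero, ← smul_neg, lie_skew] at this
              exact (smul_eq_zero.1 this).resolve_left hc₂
          · have : ⁅z, f⁆ = 0 := by rw [← neg_eq_zero, ← lie_skew]; rw [hz f]; simp
            rw [← hzc] at this
            simp only [add_lie, smul_lie, lie_self, smul_zero, add_zero] at this
            exact (smul_eq_zero.1 this).resolve_left hc₁
        have hDab : ∀ a b : g, a ∈ D → b ∈ D → ⁅a, b⁆ = 0 := by
          intro a b haD hbD
          have hm := stmt17_bk2 e f a b (hef ▸ haD) (hef ▸ hbD)
          rw [hef0] at hm
          obtain ⟨c, hc⟩ := Submodule.mem_span_singleton.1 hm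
          rw [← hc, smul_zero]
        -- pick x outside D
        have hDne : D ≠ ⊤ := by
          intro h
          rw [h, finrank_top, hdim] at hfD; omega
        obtain ⟨x, hx⟩ : ∃ x : g, x ∉ D := by
          by_contra h
          push_neg at h
          exact hDne (Submodule.eq_top_iff'.2 h)
        have htop : D ⊔ (ℝ ∙ x) = ⊤ := hsup _ x hx (by omega)
        have hmem : ∀ a : g, ∃ da ∈ D, ∃ c : ℝ, da + c • x = a := by
          intro a
          have : a ∈ D ⊔ (ℝ ∙ x) := htop ▸ Submodule.mem_top
          obtain ⟨da, hda, w, hw, hsum⟩ := Submodule.mem_sup.1 this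
          obtain ⟨c, rfl⟩ := Submodule.mem_span_singleton.1 hw
          exact ⟨da, hda, c, hsum⟩
        -- D is contained in the range of ad x restricted to D
        set φ : D →ₗ[ℝ] g := (LieAlgebra.ad ℝ g x).comp D.subtype with hφ
        have hφap : ∀ d : D, φ d = ⁅x, (d : g)⁆ := fun d => rfl
        have hDrange : D ≤ LinearMap.range φ := by
          refine le_trans (le_of_eq hD) (Submodule.span_le.2 ?_)
          rintro m ⟨a, b, rfl⟩
          obtain ⟨da, hda, c, rfl⟩ := hmem a
          obtain ⟨db, hdb, c', rfl⟩ := hmem b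
          refine ⟨⟨c • db - c' • da, Submodule.sub_mem D (D.smul_mem c hdb) (D.smul_mem c' hda)⟩, ?_⟩
          rw [hφap]
          show ⁅x, c • db - c' • da⁆ = _
          rw [lie_sub, lie_smul, lie_smul]
          rw [add_lie, lie_add, lie_add, smul_lie, lie_smul, lie_smul, smul_lie, lie_self,
            smul_zero, smul_zero, hDab da db hda hdb]
          have h1 : ⁅da, x⁆ = -⁅x, da⁆ := by rw [← lie_skew]
          rw [h1]
          module
        -- but φ kills z, contradiction with rank-nullity
        have hker : 0 < finrank ℝ (LinearMap.ker φ) := by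
          refine Module.finrank_pos_iff_exists_ne_zero.2 ⟨⟨⟨z, hzD⟩, ?_⟩, ?_⟩
          · rw [LinearMap.mem_ker, hφap]
            exact hz x
          · intro h
            apply hzne
            have := congrArg (fun w : LinearMap.ker φ => ((w : D) : g)) h
            simpa using this
        have hrk := LinearMap.finrank_range_add_finrank_ker φ
        have hle : finrank ℝ D ≤ finrank ℝ (LinearMap.range φ) :=
          Submodule.finrank_mono hDrange
        omega
      · -- z ∉ D : g = D ⊕ ℝz and D is spanned by brackets of elements of D
        have htop : D ⊔ (ℝ ∙ z) = ⊤ := hsup _ z hzD (by omega)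
        have hmem : ∀ a : g, ∃ da ∈ D, ∃ c : ℝ, da + c • z = a := by
          intro a
          have : a ∈ D ⊔ (ℝ ∙ z) := htop ▸ Submodule.mem_top
          obtain ⟨da, hda, w, hw, hsum⟩ := Submodule.mem_sup.1 this
          obtain ⟨c, rfl⟩ := Submodule.mem_span_singleton.1 hw
          exact ⟨da, hda, c, hsum⟩
        have hDle2 : D ≤ Submodule.span ℝ ({⁅e, f⁆} : Set g) := by
          rw [hD, Submodule.span_le]
          rintro m ⟨a, b, rfl⟩
          obtain ⟨da, hda, c, rfl⟩ := hmem a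
          obtain ⟨db, hdb, c', rfl⟩ := hmem b
          have hzl : ∀ w : g, ⁅z, w⁆ = 0 := fun w => by rw [← lie_skew, hz w, neg_zero]
          have h1 : ⁅da + c • z, db + c' • z⁆ = ⁅da, db⁆ := by
            simp [add_lie, lie_add, smul_lie, lie_smul, hz, hzl]
          rw [h1]
          exact stmt17_bk2 e f da db (hef ▸ hda) (hef ▸ hdb)
        have : finrank ℝ D ≤ finrank ℝ (Submodule.span ℝ ({⁅e, f⁆} : Set g)) :=
          Submodule.finrank_mono hDle2
        have h1 : finrank ℝ (Submodule.span ℝ ({⁅e, f⁆} : Set g)) ≤ 1 := by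
          rcases eq_or_ne (⁅e, f⁆ : g) 0 with h0 | h0
          · rw [h0, Submodule.span_singleton_eq_bot.2 rfl, finrank_bot]; omega
          · rw [finrank_span_singleton h0]
        omega
  -- Step 2: no one-dimensional subspace closed under brackets
  have hone : ∀ z : g, z ≠ 0 → (∀ x : g, ∃ c : ℝ, ⁅x, z⁆ = c • z) → False := by
    intro z hzne hzid
    by_cases hcent : ∀ x : g, ⁅x, z⁆ = 0
    · exact hzne (hZ0 z hcent)
    push_neg at hcent
    obtain ⟨x₁, hx₁⟩ := hcent
    obtain ⟨c₀, hc₀⟩ := hzid x₁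
    have hc₀ne : c₀ ≠ 0 := by
      intro h; rw [h, zero_smul] at hc₀; exact hx₁ hc₀
    -- B x₁ z = 0
    have hBxz : B x₁ z = 0 := by
      have h1 : B ⁅x₁, z⁆ x₁ = B x₁ ⁅z, x₁⁆ := hBinv x₁ z x₁
      rw [hc₀] at h1
      have h2 : ⁅z, x₁⁆ = -⁅x₁, z⁆ := by rw [← lie_skew]
      rw [h2, hc₀] at h1
      simp only [LinearMap.map_smul, LinearMap.smul_apply, map_neg, LinearMap.map_smul_of_tower,
        map_smul, LinearMap.neg_apply, smul_eq_mul] at h1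
      have h3 : c₀ * B z x₁ = -(c₀ * B x₁ z) := by simpa using h1
      rw [hBsymm z x₁] at h3
      have : c₀ * B x₁ z = 0 := by nlinarith [h3]
      exact (mul_eq_zero.1 this).resolve_left hc₀ne
    -- B z y = 0 for all y
    have hzero : ∀ y : g, B z y = 0 := by
      intro y
      obtain ⟨cy, hcy⟩ := hzid y
      have h1 : B ⁅x₁, z⁆ y = B x₁ ⁅z, y⁆ := hBinv x₁ z y
      have h2 : ⁅z, y⁆ = -⁅y, z⁆ := by rw [← lie_skew]
      rw [hc₀, h2, hcy] at h1
      simp only [map_smul, LinearMap.smul_apply, map_neg, LinearMap.neg_apply,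
        smul_eq_mul] at h1
      have h3 : c₀ * B z y = -(cy * B x₁ z) := by simpa using h1
      rw [hBxz] at h3
      simp at h3
      rcases h3 with h | h
      · exact absurd h hc₀ne
      · exact h
    exact hzne (hBnd.1 z hzero)
  -- Conclusion
  constructor
  · -- every ideal is ⊥ or ⊤
    intro I
    rcases eq_or_ne I ⊥ with h | hIbot
    · exact Or.inl h
    right
    set W : Submodule ℝ g := (I : Submodule ℝ g) with hW
    have hWne : W ≠ ⊥ := fun h => hIbot (LieSubmodule.toSubmodule_eq_bot I |>.1 h)
    have hWpos : 0 < finrank ℝ W := by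
      obtain ⟨x, hx, hx0⟩ := Submodule.exists_mem_ne_zero_of_ne_bot hWne
      exact Module.finrank_pos_iff_exists_ne_zero.2 ⟨⟨x, hx⟩, by simpa using hx0⟩
    have hWle : finrank ℝ W ≤ 3 := hdim ▸ Submodule.finrank_le W
    -- helper for one-dimensional bracket-closed subspaces
    have hdim1 : ∀ (U : Submodule ℝ g), finrank ℝ U = 1 →
        (∀ (x : g) (u : g), u ∈ U → ⁅x, u⁆ ∈ U) → False := by
      intro U hU hUcl
      have hUne : U ≠ ⊥ := by
        intro h; rw [h, finrank_bot] at hU; omega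
      obtain ⟨u, hu, hu0⟩ := Submodule.exists_mem_ne_zero_of_ne_bot hUne
      have hspan : Submodule.span ℝ ({u} : Set g) = U := by
        apply Submodule.eq_of_le_of_finrank_le
        · rw [Submodule.span_le, Set.singleton_subset_iff]; exact hu
        · rw [hU, finrank_span_singleton hu0]

      refine hone u hu0 ?_
      intro x
      have : ⁅x, u⁆ ∈ U := hUcl x u hu
      rw [← hspan] at this
      obtain ⟨c, hc⟩ := Submodule.mem_span_singleton.1 this
      exact ⟨c, hc.symm⟩
    rcases Nat.lt_or_ge (finrank ℝ W) 3 with hlt | hge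
    swap
    · -- finrank = 3 : I = ⊤
      rw [← LieSubmodule.toSubmodule_inj]
      have hW3 : W = ⊤ := Submodule.eq_top_of_finrank_eq (by rw [hdim]; omega)
      rw [LieSubmodule.top_toSubmodule]
      exact hW3
    rcases Nat.lt_or_ge (finrank ℝ W) 2 with hlt1 | hge2
    · -- finrank = 1
      exfalso
      refine hdim1 W (by omega) (fun x u hu => I.lie_mem hu)
    · -- finrank = 2 : use the orthogonal, a 1-dimensional bracket-closed subspace
      exfalso
      have hfW : finrank ℝ W = 2 := by omega
      apply hdim1 (B.orthogonal W)
      · rw [LinearMap.BilinForm.finrank_orthogonal hBnd, hdim, hfW]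
      · intro x a ha
        intro n hn
        have h1 : B ⁅n, x⁆ a = B n ⁅x, a⁆ := hBinv n x a
        have h2 : ⁅n, x⁆ ∈ W := by
          have : ⁅x, n⁆ ∈ W := I.lie_mem hn
          have h3 : ⁅n, x⁆ = -⁅x, n⁆ := by rw [← lie_skew]
          rw [h3]; exact W.neg_mem this
        show B n ⁅x, a⁆ = 0
        rw [← h1]
        exact ha _ h2
  · -- nonabelian
    intro h
    exact hxy₀ (trivial_lie_zero _ _ x₀ y₀)
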